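/- For real numbers a, c and exponents ℓ, ℓ' with 1/4 < ℓ' ≤ ℓ < 1/2, there exists a constant C (depending only on ℓ, ℓ') such that ∫_ℝ dx / ((1+|x-a|)^{2ℓ} (1+|x-c|)^{2ℓ'}) ≤ C / (1+|a-c|)^{2ℓ+2ℓ'-1}. -/

import Mathlib

open MeasureTheory Set

lemma cont0 (p : ℝ) : Continuous fun y : ℝ => (1 + |y|) ^ (-p) :=
  (continuous_const.add continuous_abs).rpow_const (fun x => Or.inl (ne_of_gt (add_pos_of_pos_of_nonneg one_pos (abs_nonneg _))))

lemma cont_fac (b p : ℝ) : Continuous fun x : ℝ => (1 + |x - b|) ^ (-p) :=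
  (continuous_const.add (continuous_id.sub continuous_const).abs).rpow_const
    (fun x => Or.inl (ne_of_gt (add_pos_of_pos_of_nonneg one_pos (abs_nonneg _))))

lemma intg_glob (b q : ℝ) (hq : 1 < q) : Integrable fun x : ℝ => (1 + |x - b|) ^ (-q) := by
  have h : Integrable fun x : ℝ => ((1 : ℝ) + ‖x‖) ^ (-q) := by
    apply integrable_one_add_norm
    simpa using hq
  have := h.comp_sub_right b
  simpa [Real.norm_eq_abs] using this

lemma half_int (p R : ℝ) (hp1 : p < 1) (hR : 0 ≤ R) :
    ∫ y in (0 : ℝ)..R, (1 + |y|) ^ (-p) = ((1 + R) ^ (1 - p) - 1) / (1 - p) := by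
  have h1 : ∫ y in (0 : ℝ)..R, (1 + |y|) ^ (-p) = ∫ y in (0 : ℝ)..R, (1 + y) ^ (-p) := by
    apply intervalIntegral.integral_congr
    intro y hy
    rw [uIcc_of_le hR] at hy
    simp [abs_of_nonneg hy.1]
  rw [h1]
  have h2 : ∫ y in (0 : ℝ)..R, (1 + y) ^ (-p) = ∫ y in (1 : ℝ)..(1 + R), y ^ (-p) := by
    simpa using intervalIntegral.integral_comp_add_left (a := 0) (b := R) (fun y => y ^ (-p)) 1
  rw [h2, integral_rpow (Or.inl (by linarith))]
  rw [Real.one_rpow]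
  ring_nf

lemma ball0 (p R : ℝ) (hp0 : 0 < p) (hp1 : p < 1) (hR : 0 ≤ R) :
    ∫ y in Icc (-R) R, (1 + |y|) ^ (-p) ≤ 2 / (1 - p) * (1 + R) ^ (1 - p) := by
  have hci : ∀ u v : ℝ, IntervalIntegrable (fun y : ℝ => (1 + |y|) ^ (-p)) volume u v :=
    fun u v => (cont0 p).intervalIntegrable u v
  have e1 : ∫ y in Icc (-R) R, (1 + |y|) ^ (-p) = ∫ y in (-R)..R, (1 + |y|) ^ (-p) := by
    rw [intervalIntegral.integral_of_le (by linarith), integral_Icc_eq_integral_Ioc]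
  have e2 : ∫ y in (-R)..(0:ℝ), (1 + |y|) ^ (-p) = ∫ y in (0:ℝ)..R, (1 + |y|) ^ (-p) := by
    have := intervalIntegral.integral_comp_neg (a := 0) (b := R) (fun y : ℝ => (1 + |y|) ^ (-p))
    simp only [abs_neg, neg_zero] at this
    exact this.symm
  have e3 : ∫ y in (-R)..R, (1 + |y|) ^ (-p)
      = (∫ y in (-R)..(0:ℝ), (1 + |y|) ^ (-p)) + ∫ y in (0:ℝ)..R, (1 + |y|) ^ (-p) :=
    (intervalIntegral.integral_add_adjacent_intervals (hci _ _) (hci _ _)).symm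
  rw [e1, e3, e2, half_int p R hp1 hR]
  have hpos : (0:ℝ) < 1 - p := by linarith
  have h1 : (0:ℝ) < (1 + R) ^ (1 - p) := by positivity
  have e4 : 2 / (1 - p) * (1 + R) ^ (1 - p) = (2 * (1 + R) ^ (1 - p)) / (1 - p) := by ring
  rw [← add_div, e4]
  gcongr
  linarith

lemma tail_Ioi (q R : ℝ) (hq : 1 < q) (hR : 0 ≤ R) :
    ∫ y in Ioi R, (1 + |y|) ^ (-q) = (1 + R) ^ (1 - q) / (q - 1) := by
  have step1 : ∫ y in Ioi R, (1 + |y|) ^ (-q) = ∫ y in Ioi R, (1 + y) ^ (-q) := by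
    apply setIntegral_congr_fun measurableSet_Ioi
    intro y hy
    simp [abs_of_nonneg (le_of_lt (lt_of_le_of_lt hR hy))]
  have key : ∀ y : ℝ, indicator (Ioi R) (fun y : ℝ => (1 + y) ^ (-q)) y
      = indicator (Ioi (1 + R)) (fun z : ℝ => z ^ (-q)) (y + 1) := by
    intro y
    by_cases h : R < y
    · rw [indicator_of_mem (show y ∈ Ioi R from h), indicator_of_mem (show y + 1 ∈ Ioi (1+R) by simp [mem_Ioi]; linarith)]
      rw [add_comm]
    · rw [indicator_of_notMem (show y ∉ Ioi R from h), indicator_of_notMem (show y + 1 ∉ Ioi (1+R) by simp [mem_Ioi]; linarith)]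
  have step2 : ∫ y in Ioi R, (1 + y) ^ (-q) = ∫ z in Ioi (1 + R), z ^ (-q) := by
    rw [← integral_indicator measurableSet_Ioi, ← integral_indicator measurableSet_Ioi]
    simp_rw [key]
    exact integral_add_right_eq_self _ 1
  rw [step1, step2, integral_Ioi_rpow_of_lt (by linarith) (by linarith)]
  rw [show -q + 1 = 1 - q by ring]
  rw [div_eq_div_iff (by linarith) (by linarith)]
  ring

lemma tail0 (q R : ℝ) (hq : 1 < q) (hR : 0 ≤ R) :
    ∫ y in {y : ℝ | R ≤ |y|}, (1 + |y|) ^ (-q) ≤ 2 / (q - 1) * (1 + R) ^ (1 - q) := by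
  set f : ℝ → ℝ := fun y => (1 + |y|) ^ (-q) with hf
  have hfi : Integrable f := by simpa using intg_glob 0 q hq
  have hfnn : ∀ y, 0 ≤ f y := fun y => by positivity
  have hS : MeasurableSet {y : ℝ | R ≤ |y|} := measurableSet_le measurable_const measurable_abs
  have hmono : ∀ y, indicator {y : ℝ | R ≤ |y|} f y
      ≤ indicator (Iic (-R)) f y + indicator (Ici R) f y := by
    intro y
    by_cases h : R ≤ |y|
    · rcases abs_cases y with ⟨e, _⟩ | ⟨e, _⟩
      · rw [indicator_of_mem (show y ∈ {y : ℝ | R ≤ |y|} from h)]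
        have : y ∈ Ici R := by rw [mem_Ici]; linarith [e ▸ h]
        calc f y ≤ 0 + f y := by linarith
        _ ≤ _ := by gcongr <;> [exact indicator_nonneg (fun a _ => hfnn a) _; exact (indicator_of_mem this f).symm.le]
      · rw [indicator_of_mem (show y ∈ {y : ℝ | R ≤ |y|} from h)]
        have : y ∈ Iic (-R) := by rw [mem_Iic]; linarith [e ▸ h]
        calc f y ≤ f y + 0 := by linarith
        _ ≤ _ := by gcongr <;> [exact (indicator_of_mem this f).symm.le; exact indicator_nonneg (fun a _ => hfnn a) _]
    · rw [indicator_of_notMem (show y ∉ {y : ℝ | R ≤ |y|} from h)]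
      have := indicator_nonneg (fun a (_ : a ∈ Iic (-R)) => hfnn a) y
      have := indicator_nonneg (fun a (_ : a ∈ Ici R) => hfnn a) y
      linarith
  have hInt : ∫ y, indicator {y : ℝ | R ≤ |y|} f y
      ≤ ∫ y, (indicator (Iic (-R)) f y + indicator (Ici R) f y) :=
    integral_mono (hfi.indicator hS) ((hfi.indicator measurableSet_Iic).add
      (hfi.indicator measurableSet_Ici)) hmono
  rw [integral_indicator hS] at hInt
  rw [integral_add (hfi.indicator measurableSet_Iic) (hfi.indicator measurableSet_Ici)] at hInt
  have hrefl : ∫ y, indicator (Iic (-R)) f y = ∫ y, indicator (Ici R) f y := by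
    have : ∀ y : ℝ, indicator (Iic (-R)) f y = indicator (Ici R) f (-y) := by
      intro y
      by_cases h : y ≤ -R
      · rw [indicator_of_mem (show y ∈ Iic (-R) from h), indicator_of_mem (show -y ∈ Ici R by rw [mem_Ici]; linarith)]
        simp [hf, abs_neg]
      · rw [indicator_of_notMem (show y ∉ Iic (-R) from h), indicator_of_notMem (show -y ∉ Ici R by rw [mem_Ici]; intro hc; exact h (by linarith))]
    simp_rw [this]
    exact integral_neg_eq_self _ _
  rw [hrefl, integral_indicator measurableSet_Ici, integral_Ici_eq_integral_Ioi,
    tail_Ioi q R hq hR] at hInt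
  calc ∫ y in {y : ℝ | R ≤ |y|}, (1 + |y|) ^ (-q) ≤ _ := hInt
  _ = 2 / (q - 1) * (1 + R) ^ (1 - q) := by ring

lemma inv_pow_le {X Y c p : ℝ} (hX : 0 < X) (hY : 0 < Y) (hc : 0 < c) (hp : 0 ≤ p)
    (h : Y ≤ c * X) : X ^ (-p) ≤ c ^ p * Y ^ (-p) := by
  rw [Real.rpow_neg hX.le, Real.rpow_neg hY.le]
  have h1 : Y ^ p ≤ c ^ p * X ^ p := by
    calc Y ^ p ≤ (c * X) ^ p := Real.rpow_le_rpow hY.le h hp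
    _ = c ^ p * X ^ p := Real.mul_rpow hc.le hX.le
  have hXp : (0:ℝ) < X ^ p := Real.rpow_pos_of_pos hX p
  have hYp : (0:ℝ) < Y ^ p := Real.rpow_pos_of_pos hY p
  have hcp : (0:ℝ) < c ^ p := Real.rpow_pos_of_pos hc p
  rw [← div_eq_mul_inv, inv_eq_one_div, div_le_div_iff₀ hXp hYp, one_mul]
  exact h1

lemma main_centered (K K' : ℝ) (hK'h : 1/2 < K') (hK'K : K' ≤ K) (hK1 : K < 1) (t : ℝ) :
    ∫ x : ℝ, ((1 + |x - t|) ^ K * (1 + |x|) ^ K')⁻¹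
      ≤ (2 ^ (K'+1) / (1-K) + 2 ^ (K+1) / (1-K') + 3 ^ K' * 2 ^ (K+K') / (K+K'-1))
          / (1 + |t|) ^ (K+K'-1) := by
  have hK'0 : (0:ℝ) < K' := by linarith
  have hK0 : (0:ℝ) < K := by linarith
  have hK'1 : K' < 1 := by linarith
  have hsum : (1:ℝ) < K + K' := by linarith
  set T : ℝ := |t| with hTdef
  have hT0 : 0 ≤ T := abs_nonneg t
  set R : ℝ := T / 2 with hRdef
  have hR0 : 0 ≤ R := by positivity
  have h1T : (0:ℝ) < 1 + T := by linarith
  set f : ℝ → ℝ := fun x => (1 + |x - t|) ^ (-K) * (1 + |x|) ^ (-K') with hfdef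
  have hfnn : ∀ x, 0 ≤ f x := fun x => by positivity
  have hf_eq : ∀ x : ℝ, ((1 + |x - t|) ^ K * (1 + |x|) ^ K')⁻¹ = f x := by
    intro x
    simp only [hfdef]
    rw [Real.rpow_neg (by positivity), Real.rpow_neg (by positivity), mul_inv]
  set A : Set ℝ := {x | |x - t| ≤ R} with hAdef
  set B : Set ℝ := Icc (-R) R with hBdef
  set D : Set ℝ := {x | R ≤ |x - t| ∧ R ≤ |x|} with hDdef
  have hAm : MeasurableSet A := measurableSet_le ((measurable_id.sub measurable_const).abs) measurable_const
  have hDm : MeasurableSet D :=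
    (measurableSet_le measurable_const ((measurable_id.sub measurable_const).abs)).inter
      (measurableSet_le measurable_const measurable_abs)
  set cA : ℝ := 2 ^ K' * (1 + T) ^ (-K') with hcAdef
  set cB : ℝ := 2 ^ K * (1 + T) ^ (-K) with hcBdef
  set cD : ℝ := (3:ℝ) ^ K' with hcDdef
  have hcA : 0 < cA := mul_pos (Real.rpow_pos_of_pos two_pos _) (Real.rpow_pos_of_pos h1T _)
  have hcB : 0 < cB := mul_pos (Real.rpow_pos_of_pos two_pos _) (Real.rpow_pos_of_pos h1T _)
  have hcD : 0 < cD := Real.rpow_pos_of_pos (by norm_num) _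
  set gA : ℝ → ℝ := indicator A (fun x => cA * (1 + |x - t|) ^ (-K)) with hgAdef
  set gB : ℝ → ℝ := indicator B (fun x => cB * (1 + |x|) ^ (-K')) with hgBdef
  set gD : ℝ → ℝ := indicator D (fun x => cD * (1 + |x - t|) ^ (-(K+K'))) with hgDdef
  -- integrability
  have hAcb : A = Metric.closedBall t R := by
    ext x; simp [hAdef, Metric.mem_closedBall, Real.dist_eq]
  have hgAint : Integrable gA := by
    refine IntegrableOn.integrable_indicator ?_ hAm
    exact (continuous_const.mul (cont_fac t K)).continuousOn.integrableOn_compact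
      (hAcb ▸ isCompact_closedBall t R)
  have hgBint : Integrable gB := by
    refine IntegrableOn.integrable_indicator ?_ measurableSet_Icc
    exact (continuous_const.mul (cont0 K')).continuousOn.integrableOn_compact isCompact_Icc
  have hgDint : Integrable gD :=
    (((intg_glob t (K+K') hsum)).const_mul cD).indicator hDm
  -- triangle facts
  have tri1 : ∀ x : ℝ, T ≤ |x| + |x - t| := by
    intro x
    calc T = |x + (t - x)| := by rw [hTdef]; ring_nf
    _ ≤ |x| + |t - x| := abs_add_le _ _
    _ = |x| + |x - t| := by rw [abs_sub_comm]
  have tri2 : ∀ x : ℝ, |x - t| ≤ |x| + T := by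
    intro x
    calc |x - t| = |x + -t| := by ring_nf
    _ ≤ |x| + |(-t)| := abs_add_le _ _
    _ = |x| + T := by rw [abs_neg, hTdef]
  -- pointwise bound
  have hfg : ∀ x, f x ≤ gA x + gB x + gD x := by
    intro x
    have hgAnn : 0 ≤ gA x := indicator_nonneg (fun a _ => by positivity) x
    have hgBnn : 0 ≤ gB x := indicator_nonneg (fun a _ => by positivity) x
    have hgDnn : 0 ≤ gD x := indicator_nonneg (fun a _ => by positivity) x
    by_cases hxA : |x - t| ≤ R
    · have h1 : 1 + T ≤ 2 * (1 + |x|) := by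
        have := tri1 x; rw [hRdef] at hxA; linarith
      have h2 : (1 + |x|) ^ (-K') ≤ 2 ^ K' * (1 + T) ^ (-K') :=
        inv_pow_le (by positivity) h1T two_pos hK'0.le h1
      have hfx : f x ≤ gA x := by
        rw [hgAdef, indicator_of_mem (show x ∈ A from hxA), hfdef]
        calc (1 + |x - t|) ^ (-K) * (1 + |x|) ^ (-K')
            ≤ (1 + |x - t|) ^ (-K) * (2 ^ K' * (1 + T) ^ (-K')) := by
              apply mul_le_mul_of_nonneg_left h2 (by positivity)
        _ = cA * (1 + |x - t|) ^ (-K) := by rw [hcAdef]; ring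
      linarith
    · by_cases hxB : |x| ≤ R
      · have h1 : 1 + T ≤ 2 * (1 + |x - t|) := by
          have := tri1 x; rw [hRdef] at hxB; linarith
        have h2 : (1 + |x - t|) ^ (-K) ≤ 2 ^ K * (1 + T) ^ (-K) :=
          inv_pow_le (by positivity) h1T two_pos hK0.le h1
        have hfx : f x ≤ gB x := by
          rw [hgBdef, indicator_of_mem (show x ∈ B from by rw [hBdef, mem_Icc]; exact abs_le.mp hxB), hfdef]
          calc (1 + |x - t|) ^ (-K) * (1 + |x|) ^ (-K')
              ≤ (2 ^ K * (1 + T) ^ (-K)) * (1 + |x|) ^ (-K') := by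
                apply mul_le_mul_of_nonneg_right h2 (by positivity)
          _ = cB * (1 + |x|) ^ (-K') := by rw [hcBdef]
        linarith
      · have hx1 : R ≤ |x - t| := (not_le.mp hxA).le
        have hx2 : R ≤ |x| := (not_le.mp hxB).le
        have h1 : 1 + |x - t| ≤ 3 * (1 + |x|) := by
          have := tri2 x; rw [hRdef] at hx2; linarith
        have h2 : (1 + |x|) ^ (-K') ≤ 3 ^ K' * (1 + |x - t|) ^ (-K') :=
          inv_pow_le (by positivity) (by positivity) (by norm_num) hK'0.le h1
        have hfx : f x ≤ gD x := by
          rw [hgDdef, indicator_of_mem (show x ∈ D from ⟨hx1, hx2⟩), hfdef]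
          calc (1 + |x - t|) ^ (-K) * (1 + |x|) ^ (-K')
              ≤ (1 + |x - t|) ^ (-K) * (3 ^ K' * (1 + |x - t|) ^ (-K')) := by
                apply mul_le_mul_of_nonneg_left h2 (by positivity)
          _ = cD * ((1 + |x - t|) ^ (-K) * (1 + |x - t|) ^ (-K')) := by rw [hcDdef]; ring
          _ = cD * (1 + |x - t|) ^ (-(K+K')) := by
                rw [← Real.rpow_add (by positivity)]
                congr 1
                ring
        linarith
  -- integrability of f
  have hfi : Integrable f := by
    refine Integrable.mono' ((hgAint.add hgBint).add hgDint)
      (((cont_fac t K).mul (cont0 K')).aestronglyMeasurable) ?_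
    filter_upwards with x
    rw [Real.norm_eq_abs, abs_of_nonneg (hfnn x)]
    exact hfg x
  -- integral bounds
  have hballK := ball0 K R hK0 hK1 hR0
  have hballK' := ball0 K' R hK'0 hK'1 hR0
  have htail := tail0 (K+K') R hsum hR0
  have hIA : ∫ x, gA x ≤ 2 ^ (K'+1) / (1-K) * (1+T) ^ (1-K-K') := by
    have trA : ∀ x : ℝ, gA x = indicator (Icc (-R) R) (fun y => cA * (1 + |y|) ^ (-K)) (x - t) := by
      intro x
      simp only [hgAdef]
      by_cases h : |x - t| ≤ R
      · rw [indicator_of_mem (show x ∈ A from h),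
          indicator_of_mem (show x - t ∈ Icc (-R) R from by rw [mem_Icc]; exact abs_le.mp h)]
      · rw [indicator_of_notMem (show x ∉ A from h),
          indicator_of_notMem (show x - t ∉ Icc (-R) R from by
            rw [mem_Icc]; exact fun hc => h (abs_le.mpr hc))]
    have e0 : ∫ x, gA x = cA * ∫ y in Icc (-R) R, (1 + |y|) ^ (-K) := by
      simp_rw [trA]
      rw [integral_sub_right_eq_self
        (fun y => indicator (Icc (-R) R) (fun y => cA * (1 + |y|) ^ (-K)) y) t]
      rw [integral_indicator measurableSet_Icc, integral_const_mul]
    rw [e0]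
    calc cA * ∫ y in Icc (-R) R, (1 + |y|) ^ (-K)
        ≤ cA * (2/(1-K) * (1+R) ^ (1-K)) := mul_le_mul_of_nonneg_left hballK hcA.le
    _ ≤ cA * (2/(1-K) * (1+T) ^ (1-K)) := by
        apply mul_le_mul_of_nonneg_left _ hcA.le
        apply mul_le_mul_of_nonneg_left _ (le_of_lt (div_pos two_pos (by linarith)))
        exact Real.rpow_le_rpow (by linarith) (by rw [hRdef]; linarith) (by linarith)
    _ = 2 ^ (K'+1) / (1-K) * (1+T) ^ (1-K-K') := by
        rw [hcAdef, Real.rpow_add two_pos, Real.rpow_one]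
        rw [show (1-K-K') = -K' + (1-K) by ring, Real.rpow_add h1T]
        ring
  have hIB : ∫ x, gB x ≤ 2 ^ (K+1) / (1-K') * (1+T) ^ (1-K-K') := by
    have e0 : ∫ x, gB x = cB * ∫ y in Icc (-R) R, (1 + |y|) ^ (-K') := by
      simp only [hgBdef, hBdef]
      rw [integral_indicator measurableSet_Icc, integral_const_mul]
    rw [e0]
    calc cB * ∫ y in Icc (-R) R, (1 + |y|) ^ (-K')
        ≤ cB * (2/(1-K') * (1+R) ^ (1-K')) := mul_le_mul_of_nonneg_left hballK' hcB.le
    _ ≤ cB * (2/(1-K') * (1+T) ^ (1-K')) := by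
        apply mul_le_mul_of_nonneg_left _ hcB.le
        apply mul_le_mul_of_nonneg_left _ (le_of_lt (div_pos two_pos (by linarith)))
        exact Real.rpow_le_rpow (by linarith) (by rw [hRdef]; linarith) (by linarith)
    _ = 2 ^ (K+1) / (1-K') * (1+T) ^ (1-K-K') := by
        rw [hcBdef, Real.rpow_add two_pos, Real.rpow_one]
        rw [show (1-K-K') = -K + (1-K') by ring, Real.rpow_add h1T]
        ring
  have hS0m : MeasurableSet {y : ℝ | R ≤ |y|} := measurableSet_le measurable_const measurable_abs
  have hID : ∫ x, gD x ≤ 3 ^ K' * 2 ^ (K+K') / (K+K'-1) * (1+T) ^ (1-K-K') := by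
    set S : Set ℝ := {x : ℝ | R ≤ |x - t|} with hSdef
    have hSm : MeasurableSet S :=
      measurableSet_le measurable_const ((measurable_id.sub measurable_const).abs)
    set h2 : ℝ → ℝ := indicator S (fun x => cD * (1 + |x - t|) ^ (-(K+K'))) with hh2def
    have hh2int : Integrable h2 := ((intg_glob t (K+K') hsum).const_mul cD).indicator hSm
    have hmono : ∀ x, gD x ≤ h2 x := by
      intro x
      simp only [hgDdef, hh2def]
      exact indicator_le_indicator_of_subset (fun y hy => hy.1) (fun a => by positivity) x
    have step1 : ∫ x, gD x ≤ ∫ x, h2 x := integral_mono hgDint hh2int hmono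
    have tr : ∀ x : ℝ, h2 x
        = indicator {y : ℝ | R ≤ |y|} (fun y => cD * (1 + |y|) ^ (-(K+K'))) (x - t) := by
      intro x
      simp only [hh2def]
      by_cases h : R ≤ |x - t|
      · rw [indicator_of_mem (show x ∈ S from h),
          indicator_of_mem (show x - t ∈ {y : ℝ | R ≤ |y|} from h)]
      · rw [indicator_of_notMem (show x ∉ S from h),
          indicator_of_notMem (show x - t ∉ {y : ℝ | R ≤ |y|} from h)]
    have e0 : ∫ x, h2 x = cD * ∫ y in {y : ℝ | R ≤ |y|}, (1 + |y|) ^ (-(K+K')) := by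
      simp_rw [tr]
      rw [integral_sub_right_eq_self
        (fun y => indicator {y : ℝ | R ≤ |y|} (fun y => cD * (1 + |y|) ^ (-(K+K'))) y) t]
      rw [integral_indicator hS0m, integral_const_mul]
    have e2 : (2:ℝ) ^ (K+K'-1) * 2 = 2 ^ (K+K') := by
      rw [← Real.rpow_add_one (by norm_num : (2:ℝ) ≠ 0)]
      congr 1
      ring
    calc ∫ x, gD x ≤ ∫ x, h2 x := step1
    _ = cD * ∫ y in {y : ℝ | R ≤ |y|}, (1 + |y|) ^ (-(K+K')) := e0
    _ ≤ cD * (2/(K+K'-1) * (1+R) ^ (1-(K+K'))) := mul_le_mul_of_nonneg_left htail hcD.le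
    _ ≤ cD * (2/(K+K'-1) * (2 ^ (K+K'-1) * (1+T) ^ (-(K+K'-1)))) := by
        apply mul_le_mul_of_nonneg_left _ hcD.le
        apply mul_le_mul_of_nonneg_left _ (le_of_lt (div_pos two_pos (by linarith)))
        rw [show (1-(K+K')) = -(K+K'-1) by ring]
        exact inv_pow_le (by linarith) h1T two_pos (by linarith) (by rw [hRdef]; linarith)
    _ = 3 ^ K' * 2 ^ (K+K') / (K+K'-1) * (1+T) ^ (1-K-K') := by
        rw [hcDdef, ← e2, show (1-K-K') = -(K+K'-1) by ring]
        ring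
  have hsumint : ∫ x, f x ≤ (∫ x, gA x) + (∫ x, gB x) + (∫ x, gD x) := by
    calc ∫ x, f x ≤ ∫ x, (gA x + gB x + gD x) :=
      integral_mono hfi ((hgAint.add hgBint).add hgDint) hfg
    _ = (∫ x, (gA x + gB x)) + ∫ x, gD x :=
      integral_add (hgAint.add hgBint) hgDint
    _ = ((∫ x, gA x) + ∫ x, gB x) + ∫ x, gD x := by rw [integral_add hgAint hgBint]
  calc ∫ x : ℝ, ((1 + |x - t|) ^ K * (1 + |x|) ^ K')⁻¹ = ∫ x, f x :=
      integral_congr_ae (Filter.Eventually.of_forall hf_eq)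
  _ ≤ (∫ x, gA x) + (∫ x, gB x) + (∫ x, gD x) := hsumint
  _ ≤ 2 ^ (K'+1)/(1-K) * (1+T) ^ (1-K-K') + 2 ^ (K+1)/(1-K') * (1+T) ^ (1-K-K')
      + 3 ^ K' * 2 ^ (K+K')/(K+K'-1) * (1+T) ^ (1-K-K') := add_le_add (add_le_add hIA hIB) hID
  _ = (2 ^ (K'+1)/(1-K) + 2 ^ (K+1)/(1-K') + 3 ^ K' * 2 ^ (K+K')/(K+K'-1))
      * (1+T) ^ (1-K-K') := by ring
  _ = (2 ^ (K'+1)/(1-K) + 2 ^ (K+1)/(1-K') + 3 ^ K' * 2 ^ (K+K')/(K+K'-1))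
      / (1+T) ^ (K+K'-1) := by
      rw [show (1-K-K') = -(K+K'-1) by ring, Real.rpow_neg h1T.le]
      ring

theorem stmt_2 (ℓ ℓ' : ℝ) (h1 : 1/4 < ℓ') (h2 : ℓ' ≤ ℓ) (h3 : ℓ < 1/2) :
    ∃ C : ℝ, 0 < C ∧ ∀ a c : ℝ,
      (∫ x : ℝ, ((1 + |x - a|) ^ (2 * ℓ) * (1 + |x - c|) ^ (2 * ℓ'))⁻¹)
        ≤ C / (1 + |a - c|) ^ (2 * ℓ + 2 * ℓ' - 1) := by
  have hK'h : 1/2 < 2 * ℓ' := by linarith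
  have hK'K : 2 * ℓ' ≤ 2 * ℓ := by linarith
  have hK1 : 2 * ℓ < 1 := by linarith
  refine ⟨(2:ℝ) ^ (2*ℓ'+1)/(1-2*ℓ) + 2 ^ (2*ℓ+1)/(1-2*ℓ')
    + 3 ^ (2*ℓ') * 2 ^ (2*ℓ+2*ℓ')/(2*ℓ+2*ℓ'-1), ?_, ?_⟩
  · have p1 : 0 < (2:ℝ)^(2*ℓ'+1)/(1-2*ℓ) :=
      div_pos (Real.rpow_pos_of_pos two_pos _) (by linarith)
    have p2 : 0 < (2:ℝ)^(2*ℓ+1)/(1-2*ℓ') :=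
      div_pos (Real.rpow_pos_of_pos two_pos _) (by linarith)
    have p3 : 0 < (3:ℝ)^(2*ℓ') * 2^(2*ℓ+2*ℓ')/(2*ℓ+2*ℓ'-1) :=
      div_pos (mul_pos (Real.rpow_pos_of_pos (by norm_num) _)
        (Real.rpow_pos_of_pos two_pos _)) (by linarith)
    linarith
  · intro a c
    have htr : (∫ x : ℝ, ((1 + |x - a|) ^ (2*ℓ) * (1 + |x - c|) ^ (2*ℓ'))⁻¹)
        = ∫ x : ℝ, ((1 + |x - (a - c)|) ^ (2*ℓ) * (1 + |x|) ^ (2*ℓ'))⁻¹ := by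
      rw [← integral_sub_right_eq_self
        (fun y => ((1 + |y - (a - c)|) ^ (2*ℓ) * (1 + |y|) ^ (2*ℓ'))⁻¹) c]
      congr 1
      funext x
      have hx : x - c - (a - c) = x - a := by ring
      rw [hx]
    rw [htr]
    exact main_centered (2*ℓ) (2*ℓ') hK'h hK'K hK1 (a - c)
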